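/- Let D = D₀ + θD₁ with D₀ = (ρu/r³)[[u,-1],[0,0]] and D₁ = (1/r)[[1/r,0],[-ρu,ρ]], r = 1+ρ, and set Λ = √(ρr)·|u| (assume u > 0 so Λ = √(ρru²)). The symmetric part of D is positive definite if and only if θr² ∈ (Λ/(Λ+2), ∞) when 0 ≤ Λ ≤ 2, and θr² ∈ (Λ/(Λ+2), Λ/(Λ-2)) when Λ > 2. -/

import Mathlib

theorem posdef2 (a b d : ℝ) : (!![a,b;b,d]).PosDef ↔ 0 < a ∧ 0 < a*d - b^2 := by
  constructor
  · intro h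
    have h1 := h.dotProduct_mulVec_pos (x := ![1,0]) (by
      intro hc; have := congrFun hc 0; simp at this)
    have h2 := h.det_pos
    rw [Matrix.det_fin_two_of] at h2
    constructor
    · simpa [dotProduct, Matrix.mulVec, Fin.sum_univ_two] using h1
    · nlinarith
  · rintro ⟨ha, hd⟩
    refine Matrix.PosDef.of_dotProduct_mulVec_pos ?_ ?_
    · ext i j
      fin_cases i <;> fin_cases j <;>
        simp [Matrix.conjTranspose, Matrix.vecHead, Matrix.vecTail]
    · intro x hx
      have hx' : x 0 ≠ 0 ∨ x 1 ≠ 0 := by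
        by_contra hc
        push_neg at hc
        apply hx
        ext i; fin_cases i <;> simp [hc.1, hc.2]
      have key : dotProduct (star x) (!![a,b;b,d].mulVec x) =
          a * x 0 ^ 2 + 2*b * x 0 * x 1 + d * x 1 ^ 2 := by
        simp [dotProduct, Matrix.mulVec, Fin.sum_univ_two]
        ring
      rw [key]
      rcases eq_or_ne (x 1) 0 with h1 | h1
      · have h0 : x 0 ≠ 0 := by
          rcases hx' with h | h
          · exact h
          · exact absurd h1 h
        have := pow_pos (abs_pos.mpr h0) 2
        have := sq_abs (x 0)
        rw [h1]
        nlinarith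
      · nlinarith [sq_nonneg (a * x 0 + b * x 1),
          mul_pos hd (pow_pos (abs_pos.mpr h1) 2), sq_abs (x 1)]

theorem factor_iff (Λ t : ℝ) (hΛ : 0 < Λ) (ht : 0 < t) :
    0 < ((Λ+2)*t - Λ)*((2-Λ)*t + Λ) ↔
      ((Λ ≤ 2 ∧ Λ / (Λ + 2) < t) ∨
       (2 < Λ ∧ Λ / (Λ + 2) < t ∧ t < Λ / (Λ - 2))) := by
  have h2 : 0 < Λ + 2 := by linarith
  rcases le_or_gt Λ 2 with hle | hlt
  case inl =>
    have hsec : 0 < (2-Λ)*t + Λ := by nlinarith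
    constructor
    · intro h
      left
      refine ⟨hle, ?_⟩
      rw [div_lt_iff₀ h2]
      nlinarith
    · rintro (⟨-, h⟩ | ⟨h, -⟩)
      · rw [div_lt_iff₀ h2] at h
        nlinarith
      · linarith
  case inr =>
    constructor
    · intro h
      right
      have hfst : 0 < (Λ+2)*t - Λ := by nlinarith
      have hsec : 0 < (2-Λ)*t + Λ := by nlinarith
      refine ⟨hlt, ?_, ?_⟩
      · rw [div_lt_iff₀ h2]; nlinarith
      · rw [lt_div_iff₀ (by linarith : (0:ℝ) < Λ - 2)]; nlinarith
    · rintro (⟨h, -⟩ | ⟨-, h1, h2'⟩)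
      · linarith
      · rw [div_lt_iff₀ h2] at h1
        rw [lt_div_iff₀ (by linarith : (0:ℝ) < Λ - 2)] at h2'
        nlinarith

theorem Dsym_posdef_iff
    (θ ρ u : ℝ) (hθ : 0 < θ) (hρ : 0 < ρ) (hu : 0 < u)
    (r Λ : ℝ) (hr : r = 1 + ρ) (hΛ : Λ = Real.sqrt (ρ * r * u ^ 2))
    (D : Matrix (Fin 2) (Fin 2) ℝ)
    (hD : D = (ρ * u / r ^ 3) • !![u, -1; (0 : ℝ), 0] +
          (θ / r) • !![1 / r, 0; -(ρ * u), ρ]) :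
    ((1 / 2 : ℝ) • (D + D.transpose)).PosDef ↔
      ((Λ ≤ 2 ∧ Λ / (Λ + 2) < θ * r ^ 2) ∨
       (2 < Λ ∧ Λ / (Λ + 2) < θ * r ^ 2 ∧ θ * r ^ 2 < Λ / (Λ - 2))) := by
  have hr0 : 0 < r := by rw [hr]; linarith
  have hpos : 0 < ρ * r * u ^ 2 := by positivity
  have hΛ0 : 0 < Λ := by rw [hΛ]; exact Real.sqrt_pos.mpr hpos
  have hΛ2 : Λ ^ 2 = ρ * r * u ^ 2 := by rw [hΛ]; exact Real.sq_sqrt hpos.le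
  set a : ℝ := ρ * u^2 / r^3 + θ / r^2 with ha_def
  set b : ℝ := -(ρ * u / (2*r^3) + θ * ρ * u / (2*r)) with hb_def
  set d : ℝ := θ * ρ / r with hd_def
  have hM : (1 / 2 : ℝ) • (D + D.transpose) = !![a, b; b, d] := by
    subst hD
    ext i j
    fin_cases i <;> fin_cases j <;>
      simp [Matrix.transpose, Matrix.add_apply, Matrix.smul_apply, ha_def, hb_def, hd_def,
        Matrix.vecHead, Matrix.vecTail] <;> ring
  rw [hM, posdef2]
  have ha : 0 < a := by rw [ha_def]; positivity
  have hkey : 4*r^7*(a*d - b^2) =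
      ρ * (((Λ+2)*(θ*r^2) - Λ)*((2-Λ)*(θ*r^2) + Λ)) := by
    rw [ha_def, hb_def, hd_def]
    field_simp
    linear_combination (4*(θ*r^2-1)^2) * hΛ2
  have hdet : 0 < a*d - b^2 ↔ 0 < ((Λ+2)*(θ*r^2) - Λ)*((2-Λ)*(θ*r^2) + Λ) := by
    constructor <;> intro h <;> nlinarith [pow_pos hr0 7]
  rw [iff_true_intro ha, true_and, hdet,
    factor_iff Λ (θ*r^2) hΛ0 (by positivity)]
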